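/- Let X be a compact Hausdorff space, let Y ⊆ X, and let A be a closed unital star-subalgebra of C(X, ℂ). The following are equivalent: (1) the smallest closed star-subalgebra of C(X, ℂ) containing A together with the annihilator {a ∈ C(X, ℂ) : a(y) = 0 for all y ∈ Y} is all of C(X, ℂ); (2) whenever x and y belong to the closure of Y and a(x) = a(y) for all a ∈ A, then x = y; (3) the restriction map a ↦ a|_{closure(Y)} maps A onto C(closure(Y), ℂ). -/

import Mathlib

open scoped Topology

/-- Truncation map on `ℂ` at radius `ε`. -/
noncomputable def stmt11Trunc (ε : ℝ) (hε : 0 < ε) : C(ℂ, ℂ) :=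
  ⟨fun z => ((ε / max ε ‖z‖ : ℝ) : ℂ) * z, by
    refine Continuous.mul ?_ continuous_id
    exact Complex.continuous_ofReal.comp
      (continuous_const.div (continuous_const.max continuous_norm)
        (fun z => ne_of_gt (lt_of_lt_of_le hε (le_max_left _ _))))⟩

lemma stmt11Trunc_norm_le (ε : ℝ) (hε : 0 < ε) (z : ℂ) : ‖stmt11Trunc ε hε z‖ ≤ ε := by
  have hmax : 0 < max ε ‖z‖ := lt_of_lt_of_le hε (le_max_left _ _)
  show ‖((ε / max ε ‖z‖ : ℝ) : ℂ) * z‖ ≤ ε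
  rw [norm_mul, Complex.norm_real, Real.norm_eq_abs,
    abs_of_nonneg (div_nonneg hε.le hmax.le)]
  rw [div_mul_eq_mul_div, div_le_iff₀ hmax]
  exact mul_le_mul_of_nonneg_left (le_max_right _ _) hε.le

lemma stmt11Trunc_sub_le (ε : ℝ) (hε : 0 < ε) {δ : ℝ} (hδ : 0 ≤ δ) {z : ℂ}
    (hz : ‖z‖ ≤ ε + δ) : ‖stmt11Trunc ε hε z - z‖ ≤ δ := by
  have hmax : 0 < max ε ‖z‖ := lt_of_lt_of_le hε (le_max_left _ _)
  show ‖((ε / max ε ‖z‖ : ℝ) : ℂ) * z - z‖ ≤ δ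
  have : ((ε / max ε ‖z‖ : ℝ) : ℂ) * z - z = (((ε / max ε ‖z‖ - 1 : ℝ)) : ℂ) * z := by
    push_cast; ring
  rw [this, norm_mul, Complex.norm_real, Real.norm_eq_abs]
  rcases le_total ‖z‖ ε with h | h
  · rw [max_eq_left h, div_self (ne_of_gt hε)]
    simp [hδ]
  · rw [max_eq_right h, abs_of_nonpos (by rw [sub_nonpos]; exact div_le_one_of_le₀ h (norm_nonneg z))]
    have hz0 : 0 < ‖z‖ := lt_of_lt_of_le hε h
    rw [neg_sub, sub_mul, one_mul, div_mul_cancel₀ _ (ne_of_gt hz0)]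
    linarith

/-- A closed unital star subalgebra of `C(X, ℂ)` is closed under composition with
continuous functions `ℂ → ℂ`. -/
lemma stmt11_comp_mem {X : Type*} [TopologicalSpace X] [CompactSpace X]
    (A : StarSubalgebra ℂ C(X, ℂ)) (hA : IsClosed (A : Set C(X, ℂ)))
    (φ : C(ℂ, ℂ)) {b : C(X, ℂ)} (hb : b ∈ A) : φ.comp b ∈ A := by
  set s : Set ℂ := Set.range b with hs
  have hcs : IsCompact s := isCompact_range b.continuous
  haveI : CompactSpace s := isCompact_iff_compactSpace.mp hcs
  let b' : C(X, s) := ⟨fun x => ⟨b x, Set.mem_range_self x⟩, b.continuous.subtype_mk _⟩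
  let B' : StarSubalgebra ℂ C(s, ℂ) := A.comap (ContinuousMap.compStarAlgHom' ℂ ℂ b')
  have hB'closed : IsClosed (B' : Set C(s, ℂ)) := by
    have : (B' : Set C(s, ℂ)) = (fun ψ : C(s, ℂ) => ψ.comp b') ⁻¹' (A : Set C(X, ℂ)) := rfl
    rw [this]
    exact hA.preimage (ContinuousMap.continuous_precomp b')
  let ψ : C(s, ℂ) := ⟨Subtype.val, continuous_subtype_val⟩
  have hψ : ψ ∈ B' := by
    show ψ.comp b' ∈ A
    have : ψ.comp b' = b := by ext x; rfl
    rwa [this]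
  have hsep : B'.SeparatesPoints := by
    intro p q hpq
    refine ⟨ψ, ⟨ψ, hψ, rfl⟩, ?_⟩
    exact fun h => hpq (Subtype.ext h)
  have htop : B'.topologicalClosure = ⊤ :=
    ContinuousMap.starSubalgebra_topologicalClosure_eq_top_of_separatesPoints B' hsep
  have hB'top : ∀ χ : C(s, ℂ), χ ∈ B' := by
    intro χ
    have h1 : closure (B' : Set C(s, ℂ)) = Set.univ := by
      have := congrArg (fun S : StarSubalgebra ℂ C(s, ℂ) => (S : Set C(s, ℂ))) htop
      simpa [StarSubalgebra.topologicalClosure_coe] using this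
    have h2 : (B' : Set C(s, ℂ)) = Set.univ := by
      rw [← hB'closed.closure_eq, h1]
    show χ ∈ (B' : Set C(s, ℂ))
    rw [h2]; trivial
  have h := hB'top (φ.restrict s)
  rw [StarSubalgebra.mem_comap, ContinuousMap.compStarAlgHom'_apply] at h
  have heq : (φ.restrict s).comp b' = φ.comp b := by ext x; rfl
  rwa [heq] at h

theorem stmt_11 (X : Type u) [TopologicalSpace X] [CompactSpace X] [T2Space X]
    (Y : Set X) (A : StarSubalgebra ℂ C(X, ℂ)) (hA : IsClosed (A : Set C(X, ℂ))) :
    ((StarAlgebra.adjoin ℂ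
        ((A : Set C(X, ℂ)) ∪ {a : C(X, ℂ) | ∀ y ∈ Y, a y = 0})).topologicalClosure = ⊤
      ↔ ∀ x ∈ closure Y, ∀ y ∈ closure Y, (∀ a ∈ A, a x = a y) → x = y) ∧
    ((∀ x ∈ closure Y, ∀ y ∈ closure Y, (∀ a ∈ A, a x = a y) → x = y)
      ↔ ∀ g : C(↥(closure Y), ℂ), ∃ a ∈ A, a.restrict (closure Y) = g) := by
  set K : Set X := closure Y with hK
  have hKclosed : IsClosed K := isClosed_closure
  haveI : CompactSpace K := isCompact_iff_compactSpace.mp (hKclosed.isCompact)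
  set ann : Set C(X, ℂ) := {a : C(X, ℂ) | ∀ y ∈ Y, a y = 0} with hann
  -- annihilator functions vanish on all of K
  have hannK : ∀ a ∈ ann, ∀ x ∈ K, a x = 0 := by
    intro a ha x hx
    have hcl : Y ⊆ a ⁻¹' {0} := fun y hy => ha y hy
    have : K ⊆ a ⁻¹' {0} :=
      closure_minimal hcl (IsClosed.preimage a.continuous isClosed_singleton)
    exact this hx
  -- The restriction star algebra homomorphism
  let ι : C(K, X) := ⟨Subtype.val, continuous_subtype_val⟩
  let r : C(X, ℂ) →⋆ₐ[ℂ] C(K, ℂ) := ContinuousMap.compStarAlgHom' ℂ ℂ ι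
  have hr : ∀ a : C(X, ℂ), r a = a.restrict K := fun a => by ext x; rfl
  -- separation implies surjectivity (the analytic core)
  have key23 : (∀ x ∈ K, ∀ y ∈ K, (∀ a ∈ A, a x = a y) → x = y) →
      ∀ g : C(K, ℂ), ∃ a ∈ A, a.restrict K = g := by
    intro hsep g
    -- the image subalgebra is dense
    let A' : StarSubalgebra ℂ C(K, ℂ) := A.map r
    have hA'sep : A'.SeparatesPoints := by
      intro p q hpq
      have hxy : (p : X) ≠ (q : X) := fun h => hpq (Subtype.ext h)
      have := hsep p p.2 q q.2
      have hex : ∃ a ∈ A, a (p : X) ≠ a (q : X) := by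
        by_contra hcon
        push_neg at hcon
        exact hxy (this hcon)
      obtain ⟨a, ha, hne⟩ := hex
      exact ⟨r a, ⟨r a, StarSubalgebra.mem_map.mpr ⟨a, ha, rfl⟩, rfl⟩, hne⟩
    have htop : A'.topologicalClosure = ⊤ :=
      ContinuousMap.starSubalgebra_topologicalClosure_eq_top_of_separatesPoints A' hA'sep
    -- density statement
    have hdense : ∀ h : C(K, ℂ), ∀ δ : ℝ, 0 < δ → ∃ a ∈ A, ‖r a - h‖ < δ := by
      intro h δ hδ
      have hmem : h ∈ closure (A' : Set C(K, ℂ)) := by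
        have := congrArg (fun S : StarSubalgebra ℂ C(K, ℂ) => (S : Set C(K, ℂ))) htop
        simp only [StarSubalgebra.topologicalClosure_coe] at this
        rw [this]; trivial
      rw [Metric.mem_closure_iff] at hmem
      obtain ⟨b, hb, hdist⟩ := hmem δ hδ
      obtain ⟨a, ha, rfl⟩ := StarSubalgebra.mem_map.mp hb
      refine ⟨a, ha, ?_⟩
      rwa [← dist_eq_norm, dist_comm]
    -- key approximation with norm control
    have hkey : ∀ h : C(K, ℂ), ∃ a : C(X, ℂ), a ∈ A ∧ ‖a‖ ≤ ‖h‖ ∧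
        ‖r a - h‖ ≤ 2/3 * ‖h‖ := by
      intro h
      by_cases hh : h = 0
      · exact ⟨0, zero_mem A, by simp [hh], by simp [hh, map_zero]⟩
      · have hpos : 0 < ‖h‖ := norm_pos_iff.mpr hh
        obtain ⟨b, hb, hdb⟩ := hdense h (‖h‖ / 3) (by positivity)
        set ε : ℝ := ‖h‖
        set δ : ℝ := ‖r b - h‖ with hδdef
        have hδ3 : δ < ε / 3 := hdb
        have hδ0 : 0 ≤ δ := norm_nonneg _
        let a : C(X, ℂ) := (stmt11Trunc ε hpos).comp b
        have haA : a ∈ A := stmt11_comp_mem A hA _ hb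
        refine ⟨a, haA, ?_, ?_⟩
        · rw [ContinuousMap.norm_le _ hpos.le]
          intro x
          exact stmt11Trunc_norm_le ε hpos (b x)
        · rw [ContinuousMap.norm_le _ (by positivity)]
          intro p
          have hbp : ‖b (p : X)‖ ≤ ε + δ := by
            have h1 : ‖b (p : X) - h p‖ ≤ δ := by
              have := (r b - h).norm_coe_le_norm p
              exact this
            calc ‖b (p : X)‖ ≤ ‖h p‖ + ‖b (p : X) - h p‖ := by
                  have := norm_add_le (h p) (b (p : X) - h p)
                  simpa using this
              _ ≤ ε + δ := add_le_add (h.norm_coe_le_norm p) h1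
          have h1 : ‖stmt11Trunc ε hpos (b (p : X)) - b (p : X)‖ ≤ δ :=
            stmt11Trunc_sub_le ε hpos hδ0 hbp
          have h2 : ‖b (p : X) - h p‖ ≤ δ := by
            have := (r b - h).norm_coe_le_norm p
            exact this
          have h3 : (r a - h) p = stmt11Trunc ε hpos (b (p : X)) - h p := rfl
          rw [h3]
          calc ‖stmt11Trunc ε hpos (b (p : X)) - h p‖
              ≤ ‖stmt11Trunc ε hpos (b (p : X)) - b (p : X)‖ + ‖b (p : X) - h p‖ := by
                have := norm_add_le (stmt11Trunc ε hpos (b (p : X)) - b (p : X))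
                  (b (p : X) - h p)
                simpa using this
            _ ≤ δ + δ := add_le_add h1 h2
            _ ≤ 2/3 * ε := by linarith
    -- iterate to solve exactly
    choose F hF1 hF2 hF3 using hkey
    let G : ℕ → C(K, ℂ) := fun n => Nat.rec g (fun _ gn => gn - r (F gn)) n
    have hGsucc : ∀ n, G (n + 1) = G n - r (F (G n)) := fun n => rfl
    have hGnorm : ∀ n, ‖G n‖ ≤ (2/3 : ℝ) ^ n * ‖g‖ := by
      intro n
      induction n with
      | zero => simp [G]
      | succ n ih =>
        rw [hGsucc]
        calc ‖G n - r (F (G n))‖ = ‖r (F (G n)) - G n‖ := norm_sub_rev _ _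
          _ ≤ 2/3 * ‖G n‖ := hF3 _
          _ ≤ 2/3 * ((2/3 : ℝ) ^ n * ‖g‖) := by
              have := ih; nlinarith [norm_nonneg (G n)]
          _ = (2/3 : ℝ) ^ (n + 1) * ‖g‖ := by ring
    let a : ℕ → C(X, ℂ) := fun n => F (G n)
    have hanorm : ∀ n, ‖a n‖ ≤ (2/3 : ℝ) ^ n * ‖g‖ :=
      fun n => le_trans (hF2 _) (hGnorm n)
    have hsummable : Summable a := by
      apply Summable.of_norm_bounded (Summable.mul_right ‖g‖
        (summable_geometric_of_lt_one (by norm_num) (by norm_num))) hanorm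
    set S : C(X, ℂ) := ∑' n, a n with hS
    have hhs : HasSum a S := hsummable.hasSum
    have hSA : S ∈ A := by
      refine hA.mem_of_tendsto hhs.tendsto_sum_nat
        (Filter.Eventually.of_forall fun n => ?_)
      exact sum_mem fun i _ => hF1 _
    have hrS : r S = g := by
      have hmap : HasSum (fun n => r (a n)) (r S) := by
        have : Continuous (fun f : C(X, ℂ) => r f) := ContinuousMap.continuous_precomp ι
        exact hhs.map (AddMonoidHom.mk' (fun f => r f) (map_add r)) this
      have htel : ∀ n, ∑ i ∈ Finset.range n, r (a i) = g - G n := by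
        intro n
        induction n with
        | zero => simp [G]
        | succ n ih =>
          rw [Finset.sum_range_succ, ih, hGsucc]
          abel
      have hG0 : Filter.Tendsto G Filter.atTop (𝓝 0) := by
        apply squeeze_zero_norm hGnorm
        have : Filter.Tendsto (fun n : ℕ => (2/3 : ℝ) ^ n * ‖g‖) Filter.atTop (𝓝 (0 * ‖g‖)) := by
          exact (tendsto_pow_atTop_nhds_zero_of_lt_one (by norm_num) (by norm_num)).mul_const _
        simpa using this
      have h1 : Filter.Tendsto (fun n => ∑ i ∈ Finset.range n, r (a i))
          Filter.atTop (𝓝 g) := by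
        simp only [htel]
        have := Filter.Tendsto.sub (tendsto_const_nhds (x := g)) hG0
        simpa using this
      exact tendsto_nhds_unique hmap.tendsto_sum_nat h1
    exact ⟨S, hSA, by rw [← hr]; exact hrS⟩
  constructor
  · constructor
    · -- (1) → (2)
      intro htop x hx y hy hxy
      by_contra hne
      -- every element of the closure agrees at x and y
      have hall : ∀ f : C(X, ℂ), f x = f y := by
        intro f
        have hmem : f ∈ (StarAlgebra.adjoin ℂ ((A : Set C(X, ℂ)) ∪ ann)).topologicalClosure := by
          rw [htop]; trivial
        have hsub : ((StarAlgebra.adjoin ℂ ((A : Set C(X, ℂ)) ∪ ann)) : Set C(X, ℂ)) ⊆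
            {f : C(X, ℂ) | f x = f y} := by
          have hgen : Set.EqOn (ContinuousMap.evalStarAlgHom ℂ ℂ x)
              (ContinuousMap.evalStarAlgHom ℂ ℂ y) ((A : Set C(X, ℂ)) ∪ ann) := by
            rintro f (hf | hf)
            · exact hxy f hf
            · show f x = f y
              rw [hannK f hf x hx, hannK f hf y hy]
          have hle := StarAlgHom.adjoin_le_equalizer (R := ℂ)
            (ContinuousMap.evalStarAlgHom ℂ ℂ x) (ContinuousMap.evalStarAlgHom ℂ ℂ y) hgen
          intro f hf
          exact (StarAlgHom.mem_equalizer _ _ f).mp (hle hf)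
        have hclosed : IsClosed {f : C(X, ℂ) | f x = f y} := by
          have : {f : C(X, ℂ) | f x = f y} =
              (fun f : C(X, ℂ) => f x - f y) ⁻¹' {0} := by
            ext f; simp [sub_eq_zero]
          rw [this]
          exact IsClosed.preimage ((continuous_eval_const x).sub
            (continuous_eval_const y)) isClosed_singleton
        have := closure_minimal hsub hclosed
        exact this hmem
      -- but continuous functions separate points
      obtain ⟨f, hf0, hf1, -⟩ := exists_continuous_zero_one_of_isClosed
        (isClosed_singleton (x := x)) (isClosed_singleton (x := y))
        (Set.disjoint_singleton.mpr hne)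
      let fc : C(X, ℂ) := ⟨fun z => (f z : ℂ), Complex.continuous_ofReal.comp f.continuous⟩
      have := hall fc
      simp only [fc, ContinuousMap.coe_mk] at this
      rw [hf0 rfl, hf1 rfl] at this
      norm_num at this
    · -- (2) → (1)
      intro hsep
      apply ContinuousMap.starSubalgebra_topologicalClosure_eq_top_of_separatesPoints
      intro x y hne
      by_cases hx : x ∈ K
      · by_cases hy : y ∈ K
        · have hex : ∃ a ∈ A, a x ≠ a y := by
            by_contra hcon
            push_neg at hcon
            exact hne (hsep x hx y hy hcon)
          obtain ⟨a, ha, hane⟩ := hex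
          exact ⟨a, ⟨a, StarAlgebra.subset_adjoin ℂ _ (Or.inl ha), rfl⟩, hane⟩
        · -- y ∉ K : Urysohn function vanishing on K ∪ {x}, equal 1 at y
          obtain ⟨f, hf0, hf1, -⟩ := exists_continuous_zero_one_of_isClosed
            (hKclosed.union isClosed_singleton) (isClosed_singleton (x := y))
            (by rw [Set.disjoint_singleton_right]
                rintro (h | h)
                · exact hy h
                · exact hne h.symm)
          let fc : C(X, ℂ) := ⟨fun z => (f z : ℂ), Complex.continuous_ofReal.comp f.continuous⟩
          have hfc : fc ∈ ann := by
            intro z hz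
            show ((f z : ℂ)) = 0
            rw [hf0 (Or.inl (subset_closure hz))]; simp
          refine ⟨fc, ⟨fc, StarAlgebra.subset_adjoin ℂ _ (Or.inr hfc), rfl⟩, ?_⟩
          show ((f x : ℂ)) ≠ ((f y : ℂ))
          rw [hf0 (Or.inr rfl), hf1 rfl]
          norm_num
      · -- x ∉ K
        obtain ⟨f, hf0, hf1, -⟩ := exists_continuous_zero_one_of_isClosed
          (hKclosed.union isClosed_singleton) (isClosed_singleton (x := x))
          (by rw [Set.disjoint_singleton_right]
              rintro (h | h)
              · exact hx h
              · exact hne h)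
        let fc : C(X, ℂ) := ⟨fun z => (f z : ℂ), Complex.continuous_ofReal.comp f.continuous⟩
        have hfc : fc ∈ ann := by
          intro z hz
          show ((f z : ℂ)) = 0
          rw [hf0 (Or.inl (subset_closure hz))]; simp
        refine ⟨fc, ⟨fc, StarAlgebra.subset_adjoin ℂ _ (Or.inr hfc), rfl⟩, ?_⟩
        show ((f x : ℂ)) ≠ ((f y : ℂ))
        rw [hf1 rfl, hf0 (Or.inr rfl)]
        norm_num
  · constructor
    · exact key23
    · -- (3) → (2)
      intro hsurj x hx y hy hxy
      by_contra hne
      have hne' : (⟨x, hx⟩ : K) ≠ ⟨y, hy⟩ := fun h => hne (congrArg Subtype.val h)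
      obtain ⟨f, hf0, hf1, -⟩ := exists_continuous_zero_one_of_isClosed
        (isClosed_singleton (x := (⟨x, hx⟩ : K))) (isClosed_singleton (x := (⟨y, hy⟩ : K)))
        (Set.disjoint_singleton.mpr hne')
      let g : C(K, ℂ) := ⟨fun z => (f z : ℂ), Complex.continuous_ofReal.comp f.continuous⟩
      obtain ⟨a, ha, hrest⟩ := hsurj g
      have h1 : a x = g ⟨x, hx⟩ := by
        rw [← hrest]; rfl
      have h2 : a y = g ⟨y, hy⟩ := by
        rw [← hrest]; rfl
      have := hxy a ha
      rw [h1, h2] at this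
      simp only [g, ContinuousMap.coe_mk] at this
      rw [hf0 rfl, hf1 rfl] at this
      norm_num at this
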